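/- arXiv:2411.19406 — 2 statements merged into one kernel-verified Lean document; each statement's English description precedes it below -/
import Mathlib

section
/- Let n_1, n_2 ≥ 1, ℓ_1, ℓ_2 ≥ 0, m_1 ≤ ℓ_1 n_1 and m_2 ≤ ℓ_2 n_2. If A ∈ M_{n_1×n_1}(R_{≤ℓ_1}) is (ℓ_1,q^{m_1})-Hadamard and B ∈ M_{n_2×n_2}(R_{≤ℓ_2}) is (ℓ_2,q^{m_2})-Hadamard, then the Kronecker product A ⊗ B is an (ℓ_1+ℓ_2, q^{m_1 n_2 + m_2 n_1})-Hadamard matrix. -/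
open scoped NNReal

open Classical in
/-- The absolute value `|f| = q^{-ν(f)}` on `K = Fq((x⁻¹))`, realized as the Laurent series
field `Fq((t))` with `t = x⁻¹`, so that the valuation `ν` is the `t`-adic order. -/
noncomputable def kabs (Fq : Type) [Field Fq] [Fintype Fq] (f : LaurentSeries Fq) : ℝ≥0 :=
  if f = 0 then 0 else (Fintype.card Fq : ℝ≥0) ^ (-(HahnSeries.order f))

/-- The embedding of the polynomial ring `R = Fq[x]` into `K = Fq((x⁻¹))`, sending `x` to
`t⁻¹`, i.e. to the Laurent series `single (-1) 1`. -/
noncomputable def polyToK (Fq : Type) [Field Fq] [Fintype Fq] (p : Polynomial Fq) :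
    LaurentSeries Fq :=
  Polynomial.eval₂ HahnSeries.C (HahnSeries.single (-1 : ℤ) (1 : Fq)) p

/-- The infinity norm on `K^ι`, `K = Fq((x⁻¹))`. -/
noncomputable def vnorm (Fq : Type) [Field Fq] [Fintype Fq] {ι : Type} [Fintype ι]
    (v : ι → LaurentSeries Fq) : ℝ≥0 :=
  Finset.univ.sup fun i => kabs Fq (v i)

/-- A (finite) family of vectors of `K^ι₁` is orthogonal if its members are nonzero and the
norm of any linear combination of them is the maximum of the norms of the summands. -/
def IsOrthTuple (Fq : Type) [Field Fq] [Fintype Fq] {ι₁ ι₂ : Type} [Fintype ι₁] [Fintype ι₂]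
    (u : ι₂ → ι₁ → LaurentSeries Fq) : Prop :=
  (∀ j, u j ≠ 0) ∧
    ∀ c : ι₂ → LaurentSeries Fq,
      vnorm Fq (∑ j, c j • u j) = Finset.univ.sup fun j => vnorm Fq (c j • u j)

/-- A square matrix over `R = Fq[x]` is `(l, q^m)`-Hadamard if its entries have degree at
most `l`, its columns form an orthogonal set in `K^ι`, and `|det| = q^m`. -/
def IsHadamard (Fq : Type) [Field Fq] [Fintype Fq] {ι : Type} [Fintype ι] [DecidableEq ι]
    (l m : ℕ) (A : Matrix ι ι (Polynomial Fq)) : Prop :=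
  (∀ i j, (A i j).degree ≤ (l : ℕ)) ∧
    IsOrthTuple Fq (fun j i => polyToK Fq (A i j)) ∧
    kabs Fq (polyToK Fq A.det) = (Fintype.card Fq : ℝ≥0) ^ m

section Helpers
variable (Fq : Type) [Field Fq] [Fintype Fq]

lemma qne : (Fintype.card Fq : ℝ≥0) ≠ 0 := by
  simp [Fintype.card_ne_zero]

lemma kabs_mul (f g : LaurentSeries Fq) :
    kabs Fq (f * g) = kabs Fq f * kabs Fq g := by
  by_cases hf : f = 0
  · simp [kabs, hf]
  by_cases hg : g = 0
  · simp [kabs, hg]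
  have hfg : f * g ≠ 0 := mul_ne_zero hf hg
  simp only [kabs, if_neg hf, if_neg hg, if_neg hfg, HahnSeries.order_mul hf hg, neg_add,
    zpow_add₀ (qne Fq)]

lemma kabs_pow (f : LaurentSeries Fq) (n : ℕ) :
    kabs Fq (f ^ n) = kabs Fq f ^ n := by
  induction n with
  | zero => simp [kabs]
  | succ n ih => rw [pow_succ, kabs_mul, ih, pow_succ]

lemma polyToK_mul (p q : Polynomial Fq) :
    polyToK Fq (p * q) = polyToK Fq p * polyToK Fq q := by
  simp [polyToK, Polynomial.eval₂_mul]

lemma polyToK_pow (p : Polynomial Fq) (n : ℕ) :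
    polyToK Fq (p ^ n) = polyToK Fq p ^ n := by
  simp [polyToK, Polynomial.eval₂_pow]

lemma vnorm_smul {ι : Type} [Fintype ι] (c : LaurentSeries Fq) (v : ι → LaurentSeries Fq) :
    vnorm Fq (c • v) = kabs Fq c * vnorm Fq v := by
  simp only [vnorm, Pi.smul_apply, smul_eq_mul, kabs_mul, NNReal.mul_finset_sup]

end Helpers

/-- **Kronecker products of Hadamard matrices.** If `A` is `(l₁, q^{m₁})`-Hadamard of size
`n₁ × n₁` and `B` is `(l₂, q^{m₂})`-Hadamard of size `n₂ × n₂` over `Fq[x]`, then the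
Kronecker product `A ⊗ B` is `(l₁ + l₂, q^{m₁n₂ + m₂n₁})`-Hadamard. -/
theorem kronecker_isHadamard (Fq : Type) [Field Fq] [Fintype Fq]
    (n₁ n₂ l₁ l₂ m₁ m₂ : ℕ) (hn₁ : 1 ≤ n₁) (hn₂ : 1 ≤ n₂)
    (hm₁ : m₁ ≤ l₁ * n₁) (hm₂ : m₂ ≤ l₂ * n₂)
    (A : Matrix (Fin n₁) (Fin n₁) (Polynomial Fq))
    (B : Matrix (Fin n₂) (Fin n₂) (Polynomial Fq))
    (hA : IsHadamard Fq l₁ m₁ A) (hB : IsHadamard Fq l₂ m₂ B) :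
    IsHadamard Fq (l₁ + l₂) (m₁ * n₂ + m₂ * n₁) (Matrix.kroneckerMap (· * ·) A B) := by
  obtain ⟨hAdeg, ⟨hAnz, hAorth⟩, hAdet⟩ := hA
  obtain ⟨hBdeg, ⟨hBnz, hBorth⟩, hBdet⟩ := hB
  simp only [ne_eq] at hAnz hBnz
  -- sup-level reformulations of orthogonality
  have hAorth' : ∀ c' : Fin n₁ → LaurentSeries Fq,
      (Finset.univ.sup fun i₁ => kabs Fq ((∑ j₁, c' j₁ • fun i => polyToK Fq (A i j₁)) i₁)) =
        Finset.univ.sup fun j₁ => kabs Fq (c' j₁) *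
          vnorm Fq (fun i => polyToK Fq (A i j₁)) := by
    intro c'
    have h := hAorth c'
    unfold vnorm at h
    rw [h]
    refine Finset.sup_congr rfl fun j₁ _ => ?_
    have h2 := vnorm_smul Fq (c' j₁) (fun i => polyToK Fq (A i j₁))
    unfold vnorm at h2
    exact h2
  have hBorth' : ∀ c' : Fin n₂ → LaurentSeries Fq,
      (Finset.univ.sup fun i₂ => kabs Fq ((∑ j₂, c' j₂ • fun i => polyToK Fq (B i j₂)) i₂)) =
        Finset.univ.sup fun j₂ => kabs Fq (c' j₂) *
          vnorm Fq (fun i => polyToK Fq (B i j₂)) := by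
    intro c'
    have h := hBorth c'
    unfold vnorm at h
    rw [h]
    refine Finset.sup_congr rfl fun j₂ _ => ?_
    have h2 := vnorm_smul Fq (c' j₂) (fun i => polyToK Fq (B i j₂))
    unfold vnorm at h2
    exact h2
  -- norms of columns of the Kronecker product
  have col_norm : ∀ (j₁ : Fin n₁) (j₂ : Fin n₂),
      vnorm Fq (fun i : Fin n₁ × Fin n₂ =>
          polyToK Fq ((Matrix.kroneckerMap (· * ·) A B) i (j₁, j₂))) =
        vnorm Fq (fun i => polyToK Fq (A i j₁)) * vnorm Fq (fun i => polyToK Fq (B i j₂)) := by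
    intro j₁ j₂
    unfold vnorm
    rw [← Finset.univ_product_univ, Finset.sup_product_left, NNReal.finset_sup_mul]
    refine Finset.sup_congr rfl fun i₁ _ => ?_
    rw [NNReal.mul_finset_sup]
    refine Finset.sup_congr rfl fun i₂ _ => ?_
    simp only [Matrix.kroneckerMap_apply, polyToK_mul, kabs_mul]
  refine ⟨?_, ⟨?_, ?_⟩, ?_⟩
  · -- degrees
    intro i j
    simp only [Matrix.kroneckerMap_apply]
    calc (A i.1 j.1 * B i.2 j.2).degree ≤ (A i.1 j.1).degree + (B i.2 j.2).degree :=
          Polynomial.degree_mul_le _ _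
      _ ≤ (l₁ : ℕ) + (l₂ : ℕ) := add_le_add (hAdeg _ _) (hBdeg _ _)
      _ = ((l₁ + l₂ : ℕ) : WithBot ℕ) := by push_cast; rfl
  · -- nonzero columns
    rintro ⟨j₁, j₂⟩ h
    obtain ⟨i₁, hi₁⟩ := Function.ne_iff.mp (hAnz j₁)
    obtain ⟨i₂, hi₂⟩ := Function.ne_iff.mp (hBnz j₂)
    simp only [Pi.zero_apply] at hi₁ hi₂
    have h0 := congrFun h (i₁, i₂)
    simp only [Matrix.kroneckerMap_apply, Pi.zero_apply, polyToK_mul] at h0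
    exact mul_ne_zero hi₁ hi₂ h0
  · -- orthogonality
    intro c
    -- pointwise computation of the big linear combination
    have hS : ∀ i : Fin n₁ × Fin n₂,
        (∑ j : Fin n₁ × Fin n₂, c j • fun i : Fin n₁ × Fin n₂ =>
            polyToK Fq ((Matrix.kroneckerMap (· * ·) A B) i j)) i =
          (∑ j₁, ((∑ j₂, c (j₁, j₂) • fun i' => polyToK Fq (B i' j₂)) i.2) •
            fun i' => polyToK Fq (A i' j₁)) i.1 := by
      rintro ⟨i₁, i₂⟩
      simp only [Finset.sum_apply, Pi.smul_apply, smul_eq_mul, Matrix.kroneckerMap_apply,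
        polyToK_mul]
      rw [← Finset.univ_product_univ, Finset.sum_product]
      refine Finset.sum_congr rfl fun j₁ _ => ?_
      rw [Finset.sum_mul]
      refine Finset.sum_congr rfl fun j₂ _ => ?_
      ring
    calc vnorm Fq (∑ j : Fin n₁ × Fin n₂, c j • fun i : Fin n₁ × Fin n₂ =>
            polyToK Fq ((Matrix.kroneckerMap (· * ·) A B) i j))
        = Finset.univ.sup fun i : Fin n₁ × Fin n₂ =>
            kabs Fq ((∑ j₁, ((∑ j₂, c (j₁, j₂) • fun i' => polyToK Fq (B i' j₂)) i.2) •
              fun i' => polyToK Fq (A i' j₁)) i.1) := by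
          unfold vnorm
          exact Finset.sup_congr rfl fun i _ => by rw [hS i]
      _ = Finset.univ.sup fun i₂ : Fin n₂ => Finset.univ.sup fun i₁ : Fin n₁ =>
            kabs Fq ((∑ j₁, ((∑ j₂, c (j₁, j₂) • fun i' => polyToK Fq (B i' j₂)) i₂) •
              fun i' => polyToK Fq (A i' j₁)) i₁) := by
          rw [← Finset.univ_product_univ, Finset.sup_product_right]
      _ = Finset.univ.sup fun i₂ : Fin n₂ => Finset.univ.sup fun j₁ : Fin n₁ =>
            kabs Fq ((∑ j₂, c (j₁, j₂) • fun i' => polyToK Fq (B i' j₂)) i₂) *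
              vnorm Fq (fun i => polyToK Fq (A i j₁)) := by
          exact Finset.sup_congr rfl fun i₂ _ =>
            hAorth' (fun j₁ => (∑ j₂, c (j₁, j₂) • fun i' => polyToK Fq (B i' j₂)) i₂)
      _ = Finset.univ.sup fun j₁ : Fin n₁ => Finset.univ.sup fun i₂ : Fin n₂ =>
            kabs Fq ((∑ j₂, c (j₁, j₂) • fun i' => polyToK Fq (B i' j₂)) i₂) *
              vnorm Fq (fun i => polyToK Fq (A i j₁)) := Finset.sup_comm _ _ _
      _ = Finset.univ.sup fun j₁ : Fin n₁ =>
            (Finset.univ.sup fun i₂ : Fin n₂ =>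
              kabs Fq ((∑ j₂, c (j₁, j₂) • fun i' => polyToK Fq (B i' j₂)) i₂)) *
              vnorm Fq (fun i => polyToK Fq (A i j₁)) := by
          exact Finset.sup_congr rfl fun j₁ _ => (NNReal.finset_sup_mul _ _ _).symm
      _ = Finset.univ.sup fun j₁ : Fin n₁ =>
            (Finset.univ.sup fun j₂ : Fin n₂ =>
              kabs Fq (c (j₁, j₂)) * vnorm Fq (fun i => polyToK Fq (B i j₂))) *
              vnorm Fq (fun i => polyToK Fq (A i j₁)) := by
          exact Finset.sup_congr rfl fun j₁ _ => by rw [hBorth' (fun j₂ => c (j₁, j₂))]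
      _ = Finset.univ.sup fun j₁ : Fin n₁ => Finset.univ.sup fun j₂ : Fin n₂ =>
            kabs Fq (c (j₁, j₂)) * (vnorm Fq (fun i => polyToK Fq (A i j₁)) *
              vnorm Fq (fun i => polyToK Fq (B i j₂))) := by
          refine Finset.sup_congr rfl fun j₁ _ => ?_
          rw [NNReal.finset_sup_mul]
          exact Finset.sup_congr rfl fun j₂ _ => by ring
      _ = Finset.univ.sup fun j : Fin n₁ × Fin n₂ =>
            vnorm Fq (c j • fun i : Fin n₁ × Fin n₂ =>
              polyToK Fq ((Matrix.kroneckerMap (· * ·) A B) i j)) := by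
          rw [← Finset.univ_product_univ, Finset.sup_product_left]
          refine Finset.sup_congr rfl fun j₁ _ => Finset.sup_congr rfl fun j₂ _ => ?_
          rw [vnorm_smul, col_norm j₁ j₂]
  · -- determinant
    rw [Matrix.det_kronecker, polyToK_mul, kabs_mul, polyToK_pow, polyToK_pow,
      kabs_pow, kabs_pow, hAdet, hBdet]
    simp [Fintype.card_fin, ← pow_mul, ← pow_add]
end

section
/- Let f: P^{n-1}(F_q) → ℤ be a function, let 2 ≤ ℓ ≤ n, and let r ∈ ℤ be such that Σ_{z ∈ I} f(z) = r for every (ℓ-2)-dimensional projective subspace I ≤ P^{n-1}(F_q). Then f is constant, equal to r(q-1)/(q^{ℓ-1}-1). -/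
open Module Finset
open scoped LinearAlgebra.Projectivization

variable {κ : Type} [Field κ] [Fintype κ] {V : Type} [AddCommGroup V] [Module κ V]

lemma aux_finrank_sup_span [FiniteDimensional κ V] (U : Submodule κ V) {v : V} (hv : v ∉ U) :
    finrank κ ↥(U ⊔ (κ ∙ v)) = finrank κ U + 1 := by
  have hv0 : v ≠ 0 := fun h => hv (h ▸ U.zero_mem)
  have h1 : U ⊓ (κ ∙ v) = ⊥ := by
    rw [← disjoint_iff]
    exact (Submodule.disjoint_span_singleton' hv0).2 hv
  have h2 := Submodule.finrank_sup_add_finrank_inf_eq U (κ ∙ v)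
  rw [h1, finrank_bot, finrank_span_singleton hv0] at h2
  omega

lemma aux_exists_finrank [FiniteDimensional κ V] (d : ℕ) (hd : d ≤ finrank κ V) :
    ∃ U : Submodule κ V, finrank κ U = d := by
  induction d with
  | zero => exact ⟨⊥, finrank_bot _ _⟩
  | succ d ih =>
    obtain ⟨U, hU⟩ := ih (by omega)
    have hne : U ≠ ⊤ := by
      intro h
      rw [h, finrank_top] at hU
      omega
    have hlt : U < ⊤ := lt_top_iff_ne_top.2 hne
    obtain ⟨v, -, hv⟩ := SetLike.exists_of_lt hlt
    exact ⟨U ⊔ (κ ∙ v), by rw [aux_finrank_sup_span U hv, hU]⟩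

lemma aux_mem_iff (p : ℙ κ V) (U : Submodule κ V) :
    p.submodule ≤ U ↔ p.rep ∈ U := by
  rw [Projectivization.submodule_eq, Submodule.span_singleton_le_iff_mem]

/-- number of points in a submodule -/
lemma aux_card_points [Finite V] (W : Submodule κ V) :
    Nat.card {p : ℙ κ V // p.submodule ≤ W} * (Fintype.card κ - 1) + 1
      = Fintype.card κ ^ finrank κ ↥W := by
  classical
  haveI : Fintype V := Fintype.ofFinite _
  have e : {p : ℙ κ V // p.submodule ≤ W} × κˣ ≃ {v : V // v ∈ W ∧ v ≠ 0} := by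
    refine Equiv.ofBijective
      (fun x => ⟨(x.2 : κ) • x.1.1.rep, ?_, ?_⟩) ⟨?_, ?_⟩
    · exact W.smul_mem _ (((aux_mem_iff x.1.1 W).1 x.1.2))
    · exact smul_ne_zero (Units.ne_zero _) x.1.1.rep_nonzero
    · rintro ⟨⟨p, hp⟩, c⟩ ⟨⟨p', hp'⟩, c'⟩ h
      simp only [Subtype.mk.injEq] at h
      have h' : c • p.rep = c' • p'.rep := by simpa [Units.smul_def] using h
      have hpp : p = p' := by
        conv_lhs => rw [← p.mk_rep]
        conv_rhs => rw [← p'.mk_rep]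
        rw [Projectivization.mk_eq_mk_iff]
        exact ⟨c⁻¹ * c', by rw [mul_smul, ← h', inv_smul_smul]⟩
      subst hpp
      simp only [Prod.mk.injEq, Subtype.mk.injEq, true_and]
      ext
      exact smul_left_injective κ p.rep_nonzero h
    · rintro ⟨v, hvW, hv0⟩
      obtain ⟨a, ha⟩ := Projectivization.exists_smul_eq_mk_rep κ v hv0
      refine ⟨⟨⟨Projectivization.mk κ v hv0, ?_⟩, a⁻¹⟩, ?_⟩
      · rw [aux_mem_iff, ← ha]
        exact W.smul_mem _ hvW
      · simp only [Subtype.mk.injEq, ← ha, Units.smul_def, smul_smul]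
        simp
  have hc := Nat.card_congr e
  rw [Nat.card_prod, Nat.card_eq_fintype_card (α := κˣ), Fintype.card_units] at hc
  have e2 : {v : V // v ∈ W ∧ v ≠ 0} ≃ {w : ↥W // ¬ (w = 0)} :=
    ((Equiv.subtypeSubtypeEquivSubtypeInter (· ∈ W) (· ≠ 0)).symm.trans
      (Equiv.subtypeEquivRight (fun w => by simp [Submodule.coe_eq_zero])))
  rw [Nat.card_congr e2] at hc
  have h3 : Nat.card {w : ↥W // ¬ (w = 0)} + 1 = Fintype.card κ ^ finrank κ ↥W := by
    rw [Nat.card_eq_fintype_card, Fintype.card_subtype_compl,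
      Fintype.card_subtype_eq (0 : ↥W), ← card_eq_pow_finrank (K := κ) (V := ↥W)]
    have : 1 ≤ Fintype.card ↥W := Fintype.card_pos
    omega
  omega

/-- count vectors in `W` outside `U` -/
lemma aux_card_between [Finite V] {U W : Submodule κ V} (h : U ≤ W) :
    Nat.card {v : V // v ∈ W ∧ v ∉ U} + Fintype.card κ ^ finrank κ ↥U
      = Fintype.card κ ^ finrank κ ↥W := by
  classical
  haveI : Fintype V := Fintype.ofFinite _
  have e : {v : V // v ∈ W ∧ v ∉ U} ≃ {w : ↥W // ¬ ((w : V) ∈ U)} :=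
    (Equiv.subtypeSubtypeEquivSubtypeInter (· ∈ W) (· ∉ U)).symm
  have e3 : {w : ↥W // (w : V) ∈ U} ≃ {v : V // v ∈ U} :=
    Equiv.subtypeSubtypeEquivSubtype (fun {x} hx => h hx)
  rw [Nat.card_congr e, Nat.card_eq_fintype_card, Fintype.card_subtype_compl,
    ← card_eq_pow_finrank (K := κ) (V := ↥W), ← card_eq_pow_finrank (K := κ) (V := ↥U)]
  have h1 : Fintype.card {w : ↥W // (w : V) ∈ U} = Fintype.card ↥U := by
    rw [Fintype.card_congr e3]
  have h2 : Fintype.card {w : ↥W // (w : V) ∈ U} ≤ Fintype.card ↥W :=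
    Fintype.card_subtype_le _
  omega

/-- count one-dimension extensions of `U` -/
lemma aux_card_exts [Finite V] (U : Submodule κ V) :
    Nat.card {W : Submodule κ V // U ≤ W ∧ finrank κ ↥W = finrank κ ↥U + 1}
        * (Fintype.card κ ^ (finrank κ ↥U + 1) - Fintype.card κ ^ finrank κ ↥U)
      = Fintype.card κ ^ finrank κ V - Fintype.card κ ^ finrank κ ↥U := by
  classical
  haveI : Fintype V := Fintype.ofFinite _
  haveI : Finite (Submodule κ V) := Finite.of_injective _ SetLike.coe_injective
  haveI : Fintype (Submodule κ V) := Fintype.ofFinite _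
  haveI : FiniteDimensional κ V := Module.Finite.of_finite
  have e : (Σ W : {W : Submodule κ V // U ≤ W ∧ finrank κ ↥W = finrank κ ↥U + 1},
      {v : V // v ∈ W.1 ∧ v ∉ U}) ≃ {v : V // v ∉ U} := by
    refine Equiv.ofBijective (fun x => ⟨x.2.1, x.2.2.2⟩) ⟨?_, ?_⟩
    · rintro ⟨⟨W, hW1, hW2⟩, v, hv1, hv2⟩ ⟨⟨W', hW1', hW2'⟩, v', hv1', hv2'⟩ hh
      simp only [Subtype.mk.injEq] at hh
      subst hh
      have key : ∀ (W : Submodule κ V), U ≤ W → finrank κ ↥W = finrank κ ↥U + 1 →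
          v ∈ W → W = U ⊔ (κ ∙ v) := by
        intro W hle hrk hmem
        refine (Submodule.eq_of_le_of_finrank_eq (sup_le hle
          ((Submodule.span_singleton_le_iff_mem v W).2 hmem)) ?_).symm
        rw [hrk, aux_finrank_sup_span U hv2]
      have : W = W' := (key W hW1 hW2 hv1).trans (key W' hW1' hW2' hv1').symm
      subst this
      rfl
    · rintro ⟨v, hv⟩
      refine ⟨⟨⟨U ⊔ (κ ∙ v), le_sup_left, aux_finrank_sup_span U hv⟩,
        ⟨v, ?_, hv⟩⟩, rfl⟩
      exact le_sup_right (α := Submodule κ V) ((Submodule.mem_span_singleton_self v))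
  have hc := Nat.card_congr e
  rw [Nat.card_eq_fintype_card, Fintype.card_sigma] at hc
  have hfib : ∀ W : {W : Submodule κ V // U ≤ W ∧ finrank κ ↥W = finrank κ ↥U + 1},
      Nat.card {v : V // v ∈ W.1 ∧ v ∉ U}
        = Fintype.card κ ^ (finrank κ ↥U + 1) - Fintype.card κ ^ finrank κ ↥U := by
    intro W
    have := aux_card_between (κ := κ) W.2.1
    rw [W.2.2] at this
    omega
  rw [Finset.sum_const_nat (fun W _ => by rw [← Nat.card_eq_fintype_card]; exact hfib W),
    Finset.card_univ, ← Nat.card_eq_fintype_card] at hc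
  rw [hc]
  have h4 : Nat.card {v : V // v ∉ U} + Fintype.card κ ^ finrank κ ↥U
      = Fintype.card κ ^ finrank κ V := by
    have := aux_card_between (κ := κ) (le_top (a := U))
    rw [finrank_top] at this
    rwa [Nat.card_congr (show {v : V // v ∈ (⊤ : Submodule κ V) ∧ v ∉ U} ≃ {v : V // v ∉ U}
      from Equiv.subtypeEquivRight (fun v => by simp))] at this
  omega

/-- **Functions with constant sums over projective subspaces are constant.**
Let `κ` be a finite field with `q` elements, `2 ≤ l ≤ n`, and let `f : ℙ^{n-1}(κ) → ℤ` be
such that the sum of `f` over every `(l-2)`-dimensional projective subspace of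
`ℙ^{n-1}(κ)` (i.e. over the set of points lying in a fixed linear subspace `W ≤ κ^n` of
linear dimension `l - 1`) equals `r`. Then `f` is constant, equal to
`r(q-1)/(q^(l-1)-1)`. -/
theorem constant_of_sum_over_subspaces (κ : Type) [Field κ] [Fintype κ] (q : ℕ)
    (hq : Fintype.card κ = q) (n l : ℕ) (hl : 2 ≤ l) (hln : l ≤ n)
    (f : Projectivization κ (Fin n → κ) → ℤ) (r : ℤ)
    (hsum : ∀ W : Submodule κ (Fin n → κ), Module.finrank κ W = l - 1 →
      ∑ᶠ p ∈ {p : Projectivization κ (Fin n → κ) | Projectivization.submodule p ≤ W}, f p = r) :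
    ∀ p : Projectivization κ (Fin n → κ),
      (f p : ℚ) = (r * ((q : ℚ) - 1)) / ((q : ℚ) ^ (l - 1) - 1) := by
  classical
  have hq2 : 2 ≤ q := by rw [← hq]; exact Fintype.one_lt_card
  haveI : Finite (ℙ κ (Fin n → κ)) := Quotient.finite _
  haveI : Fintype (ℙ κ (Fin n → κ)) := Fintype.ofFinite _
  haveI : Finite (Submodule κ (Fin n → κ)) := Finite.of_injective _ SetLike.coe_injective
  haveI : Fintype (Submodule κ (Fin n → κ)) := Fintype.ofFinite _
  have hrn : finrank κ (Fin n → κ) = n := by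
    rw [Module.finrank_pi]; exact Fintype.card_fin n
  set F : Submodule κ (Fin n → κ) → Finset (ℙ κ (Fin n → κ)) :=
    fun W => Finset.univ.filter (fun p => p.submodule ≤ W) with hF
  have hFmem : ∀ (p : ℙ κ (Fin n → κ)) W, p ∈ F W ↔ p.submodule ≤ W := by
    intro p W; simp [hF]
  have hFmono : ∀ {V W : Submodule κ (Fin n → κ)}, V ≤ W → F V ⊆ F W := by
    intro V W h p hp
    rw [hFmem] at *
    exact le_trans hp h
  have hsum' : ∀ W : Submodule κ (Fin n → κ), finrank κ W = l - 1 →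
      ∑ p ∈ F W, f p = r := by
    intro W hW
    rw [← hsum W hW,
      show {p : ℙ κ (Fin n → κ) | p.submodule ≤ W} = ↑(F W) by ext p; simp [hF],
      finsum_mem_coe_finset]
  set G : Submodule κ (Fin n → κ) → Finset (Submodule κ (Fin n → κ)) :=
    fun U => Finset.univ.filter (fun W => U ≤ W ∧ finrank κ ↥W = finrank κ ↥U + 1) with hG
  have hsup : ∀ (U : Submodule κ (Fin n → κ)) (p : ℙ κ (Fin n → κ)), ¬ p.submodule ≤ U →
      finrank κ ↥(U ⊔ p.submodule) = finrank κ ↥U + 1 := by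
    intro U p hp
    rw [aux_mem_iff] at hp
    rw [Projectivization.submodule_eq]
    exact aux_finrank_sup_span U hp
  -- step 1 : the sum identity
  have step1 : ∀ U : Submodule κ (Fin n → κ),
      ∑ W ∈ G U, (∑ p ∈ F W, f p)
        = (G U).card • (∑ p ∈ F U, f p) + (∑ p ∈ Finset.univ \ F U, f p) := by
    intro U
    have hsplit : ∀ W ∈ G U, ∑ p ∈ F W, f p = (∑ p ∈ F U, f p) + ∑ p ∈ F W \ F U, f p := by
      intro W hW
      rw [hG, Finset.mem_filter] at hW
      rw [add_comm, Finset.sum_sdiff (hFmono hW.2.1)]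
    rw [Finset.sum_congr rfl hsplit, Finset.sum_add_distrib, Finset.sum_const]
    congr 1
    have hmaps : ∀ p ∈ Finset.univ \ F U, U ⊔ p.submodule ∈ G U := by
      intro p hp
      rw [Finset.mem_sdiff, hFmem] at hp
      rw [hG, Finset.mem_filter]
      exact ⟨Finset.mem_univ _, le_sup_left, hsup U p hp.2⟩
    rw [← Finset.sum_fiberwise_of_maps_to hmaps f]
    refine Finset.sum_congr rfl ?_
    intro W hW
    rw [hG, Finset.mem_filter] at hW
    refine Finset.sum_congr ?_ (fun _ _ => rfl)
    ext p
    simp only [Finset.mem_filter, Finset.mem_sdiff, Finset.mem_univ, true_and, hFmem]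
    constructor
    · rintro ⟨hpW, hpU⟩
      exact ⟨hpU, Submodule.eq_of_le_of_finrank_eq (sup_le hW.2.1 hpW)
        (by rw [hsup U p hpU, hW.2.2])⟩
    · rintro ⟨hpU, rfl⟩
      exact ⟨le_sup_right, hpU⟩
  -- step 2 : cardinality of G U depends only on finrank U, and is at least 2
  have hGcard : ∀ U : Submodule κ (Fin n → κ),
      (G U).card * (q ^ (finrank κ ↥U + 1) - q ^ finrank κ ↥U)
        = q ^ n - q ^ finrank κ ↥U := by
    intro U
    have h := aux_card_exts (κ := κ) U
    rw [Nat.card_eq_fintype_card, Fintype.card_subtype, hq, hrn] at h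
    exact h
  have step2 : ∀ U U' : Submodule κ (Fin n → κ), finrank κ ↥U = finrank κ ↥U' →
      finrank κ ↥U + 2 ≤ n → (G U).card = (G U').card ∧ 2 ≤ (G U).card := by
    intro U U' hUU' hdn
    have h1 := hGcard U
    have h2 := hGcard U'
    rw [← hUU'] at h2
    have hab : q ^ finrank κ ↥U < q ^ (finrank κ ↥U + 1) :=
      Nat.pow_lt_pow_right (by omega) (by omega)
    have hbc : q ^ (finrank κ ↥U + 1) < q ^ n :=
      Nat.pow_lt_pow_right (by omega) (by omega)
    constructor
    · exact Nat.eq_of_mul_eq_mul_right (by omega) (h1.trans h2.symm)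
    · by_contra hN
      rcases Nat.le_one_iff_eq_zero_or_eq_one.mp (by omega : (G U).card ≤ 1) with h | h <;>
        rw [h] at h1 <;> omega
  -- downward induction
  have key : ∀ k d, 1 ≤ d → d + k = l - 1 →
      ∀ U U' : Submodule κ (Fin n → κ), finrank κ ↥U = d → finrank κ ↥U' = d →
        ∑ p ∈ F U, f p = ∑ p ∈ F U', f p := by
    intro k
    induction k with
    | zero =>
      intro d _ hdl U U' hU hU'
      rw [hsum' U (by omega), hsum' U' (by omega)]
    | succ k ih =>
      intro d hd hdl U U' hU hU'
      have hdn : d + 2 ≤ n := by omega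
      obtain ⟨W₀, hW₀⟩ := aux_exists_finrank (κ := κ) (V := Fin n → κ) (d + 1) (by omega)
      have hGval : ∀ U1 : Submodule κ (Fin n → κ), finrank κ ↥U1 = d →
          ∀ W ∈ G U1, ∑ p ∈ F W, f p = ∑ p ∈ F W₀, f p := by
        intro U1 hU1 W hW
        rw [hG, Finset.mem_filter] at hW
        exact ih (d + 1) (by omega) (by omega) W W₀ (by rw [hW.2.2, hU1]) hW₀
      have hid : ∀ U1 : Submodule κ (Fin n → κ), finrank κ ↥U1 = d →
          ((G U1).card : ℤ) * (∑ p ∈ F W₀, f p)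
            = (G U1).card * (∑ p ∈ F U1, f p)
              + ((∑ p, f p) - ∑ p ∈ F U1, f p) := by
        intro U1 hU1
        have h := step1 U1
        rw [Finset.sum_congr rfl (hGval U1 hU1), Finset.sum_const,
          Finset.sum_sdiff_eq_sub (Finset.subset_univ _)] at h
        simp only [nsmul_eq_mul] at h
        linarith [h]
      have hc := step2 U U' (by rw [hU, hU']) (by omega)
      have h1 := hid U hU
      have h2 := hid U' hU'
      rw [← hc.1] at h2
      have hne : ((G U).card : ℤ) - 1 ≠ 0 := by
        have := hc.2
        omega
      apply mul_left_cancel₀ hne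
      have : (((G U).card : ℤ) - 1) * (∑ p ∈ F U, f p)
          = (((G U).card : ℤ) - 1) * (∑ p ∈ F U', f p) := by linarith
      exact this
  -- endgame
  intro p
  have hconst : ∀ p' : ℙ κ (Fin n → κ), f p' = f p := by
    intro p'
    have hsingle : ∀ z : ℙ κ (Fin n → κ), F z.submodule = {z} := by
      intro z
      ext w
      rw [hFmem, Finset.mem_singleton]
      constructor
      · intro hw
        apply Projectivization.submodule_injective
        exact Submodule.eq_of_le_of_finrank_eq hw
          (by rw [w.finrank_submodule, z.finrank_submodule])
      · rintro rfl; exact le_rfl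
    have h1 := key (l - 2) 1 le_rfl (by omega) p'.submodule p.submodule
      p'.finrank_submodule p.finrank_submodule
    rw [hsingle, hsingle] at h1
    simpa using h1
  obtain ⟨W₁, hW₁⟩ := aux_exists_finrank (κ := κ) (V := Fin n → κ) (l - 1) (by omega)
  have hr : (r : ℚ) = ((F W₁).card : ℚ) * (f p : ℚ) := by
    have : r = ((F W₁).card : ℤ) * f p := by
      rw [← hsum' W₁ hW₁, Finset.sum_congr rfl (fun z _ => hconst z), Finset.sum_const,
        nsmul_eq_mul]
    exact_mod_cast this
  have hcard : (F W₁).card * (q - 1) + 1 = q ^ (l - 1) := by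
    have h := aux_card_points (κ := κ) W₁
    rw [Nat.card_eq_fintype_card, Fintype.card_subtype, hq, hW₁] at h
    exact h
  have h9 : ((F W₁).card : ℚ) * ((q : ℚ) - 1) = (q : ℚ) ^ (l - 1) - 1 := by
    have := congrArg (Nat.cast : ℕ → ℚ) hcard
    push_cast [Nat.cast_sub (show 1 ≤ q by omega)] at this
    linarith
  have hden : (q : ℚ) ^ (l - 1) - 1 ≠ 0 := by
    have h1 : (1 : ℚ) < (q : ℚ) ^ (l - 1) := by
      have : (1 : ℚ) < (q : ℚ) := by exact_mod_cast hq2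
      exact one_lt_pow₀ this (by omega)
    linarith
  rw [eq_div_iff hden]
  linear_combination (-(f p : ℚ)) * h9 - ((q : ℚ) - 1) * hr
end
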